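/- Let f be C⁸ with simple zero x* and e_y := y - x* = O(e²) where e = x - x* → 0, y = x - f(x)/f'(x). If z is defined by the second substep of method (1), then f(z) = f'(x*)·(e_z + O(e_z²)) where e_z = z - x*, and consequently f(z) = O(e⁴). -/

import Mathlib

open Filter Topology Asymptotics Set

/-- Powers of (x - a) compare near a. -/
lemma pow_isBigO_pow {a : ℝ} {j k : ℕ} (h : k ≤ j) :
    (fun x : ℝ => (x - a)^j) =O[𝓝 a] fun x => (x - a)^k := by
  obtain ⟨m, rfl⟩ := Nat.exists_eq_add_of_le h
  have h1 : Tendsto (fun x : ℝ => (x - a)^m) (𝓝 a) (𝓝 ((a - a)^m)) := by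
    exact ((continuous_id.sub continuous_const).pow m).tendsto a
  have h2 : (fun x : ℝ => (x - a)^m) =O[𝓝 a] (fun _ => (1:ℝ)) :=
    h1.isBigO_one ℝ
  calc (fun x : ℝ => (x - a)^(k + m)) = fun x => (x-a)^k * (x-a)^m := by
        funext x; rw [pow_add]
    _ =O[𝓝 a] fun x => (x-a)^k * 1 := (isBigO_refl _ _).mul h2
    _ = fun x => (x-a)^k := by funext x; ring


/-- MVT ladder: if φ(a)=0 and φ' = O((x-a)^k), then φ = O((x-a)^(k+1)). -/
lemma isBigO_succ_of_deriv {a : ℝ} {φ : ℝ → ℝ} {k : ℕ}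
    (hd : ∀ᶠ x in 𝓝 a, DifferentiableAt ℝ φ x) (h0 : φ a = 0)
    (hO : deriv φ =O[𝓝 a] fun x => (x - a)^k) :
    φ =O[𝓝 a] fun x => (x - a)^(k+1) := by
  rw [isBigO_iff] at hO
  obtain ⟨C, hC⟩ := hO
  obtain ⟨δ, hδ, hball⟩ := Metric.eventually_nhds_iff_ball.1 (hd.and hC)
  set C' := max C 0 with hC'
  rw [isBigO_iff]
  refine ⟨C', eventually_of_mem (Metric.ball_mem_nhds a hδ) fun x hx => ?_⟩
  have hsub : uIcc a x ⊆ Metric.ball a δ := by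
    rw [← segment_eq_uIcc]
    exact (convex_ball a δ).segment_subset (Metric.mem_ball_self hδ) hx
  have key : ‖φ x - φ a‖ ≤ C' * |x - a|^k * ‖x - a‖ := by
    apply Convex.norm_image_sub_le_of_norm_deriv_le
      (fun t ht => (hball t (hsub ht)).1)
      (fun t ht => ?_) (convex_uIcc a x) left_mem_uIcc right_mem_uIcc
    have h1 := (hball t (hsub ht)).2
    have h2 : |t - a| ≤ |x - a| := abs_sub_left_of_mem_uIcc ht
    calc ‖deriv φ t‖ ≤ C * ‖(t - a)^k‖ := h1
      _ ≤ C' * |x - a|^k := by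
          rw [Real.norm_eq_abs, abs_pow]
          have : |t-a|^k ≤ |x-a|^k := pow_le_pow_left₀ (abs_nonneg _) h2 k
          have hC0 : C ≤ C' := le_max_left _ _
          nlinarith [abs_nonneg (t-a), pow_nonneg (abs_nonneg (t-a)) k,
            pow_nonneg (abs_nonneg (x-a)) k, le_max_right C 0]
  rw [h0, sub_zero] at key
  calc ‖φ x‖ ≤ C' * |x - a|^k * ‖x - a‖ := key
    _ = C' * ‖(x - a)^(k+1)‖ := by
        rw [Real.norm_eq_abs, Real.norm_eq_abs, abs_pow]; ring


/-- Dividing by a denominator bounded below by a constant. -/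
lemma isBigO_div_const {a c : ℝ} {g den h : ℝ → ℝ} (hc : 0 < c)
    (hg : g =O[𝓝 a] h) (hden : ∀ᶠ x in 𝓝 a, c ≤ |den x|) :
    (fun x => g x / den x) =O[𝓝 a] h := by
  rw [isBigO_iff] at hg ⊢
  obtain ⟨C, hC⟩ := hg
  refine ⟨C / c, (hC.and hden).mono fun x ⟨h1, h2⟩ => ?_⟩
  have hden0 : den x ≠ 0 := fun h => by rw [h, abs_zero] at h2; linarith
  rw [Real.norm_eq_abs, abs_div]
  rw [div_le_iff₀ (lt_of_lt_of_le hc h2 : (0:ℝ) < |den x|)] at *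
  calc |g x| ≤ C * ‖h x‖ := h1
    _ ≤ C / c * ‖h x‖ * |den x| := by
        rw [div_mul_eq_mul_div, div_mul_eq_mul_div, le_div_iff₀ hc]
        have : C * ‖h x‖ = |g x| ∨ C * ‖h x‖ ≥ 0 := by
          right
          exact le_trans (norm_nonneg (g x)) h1
        nlinarith [norm_nonneg (g x), abs_nonneg (den x)]

/-- Dividing an O((x-a)^(k+1)) numerator by a denominator ≥ c|x-a|. -/
lemma isBigO_div_lin {a c : ℝ} {g den : ℝ → ℝ} {k : ℕ} (hc : 0 < c)
    (hg : g =O[𝓝 a] fun x => (x - a)^(k+1))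
    (hden : ∀ᶠ x in 𝓝 a, c * |x - a| ≤ |den x|) :
    (fun x => g x / den x) =O[𝓝 a] fun x => (x - a)^k := by
  rw [isBigO_iff] at hg ⊢
  obtain ⟨C, hC⟩ := hg
  refine ⟨(max C 0) / c, (hC.and hden).mono fun x ⟨h1, h2⟩ => ?_⟩
  have hC0 : 0 ≤ max C 0 := le_max_right _ _
  rcases eq_or_ne x a with rfl | hxa
  · have : ‖g x‖ ≤ 0 := by simpa using h1
    have hg0 : g x = 0 := by simpa [norm_le_zero_iff] using this
    simp [hg0]
    positivity
  · have he : 0 < |x - a| := abs_pos.2 (sub_ne_zero.2 hxa)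
    have hdenpos : 0 < |den x| := lt_of_lt_of_le (by positivity) h2
    rw [Real.norm_eq_abs, abs_div, div_le_iff₀ hdenpos]
    have h1' : |g x| ≤ (max C 0) * |x - a|^(k+1) := by
      calc |g x| ≤ C * ‖(x-a)^(k+1)‖ := h1
        _ ≤ (max C 0) * |x - a|^(k+1) := by
            rw [Real.norm_eq_abs, abs_pow]
            exact mul_le_mul_of_nonneg_right (le_max_left _ _) (by positivity)
    calc |g x| ≤ (max C 0) * |x - a|^(k+1) := h1'
      _ = ((max C 0) / c * |x-a|^k) * (c * |x-a|) := by
          field_simp; ring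
      _ ≤ ((max C 0) / c * |x-a|^k) * |den x| := by
          apply mul_le_mul_of_nonneg_left h2; positivity
      _ = (max C 0) / c * ‖(x-a)^k‖ * |den x| := by
          rw [Real.norm_eq_abs, abs_pow]

set_option maxHeartbeats 1000000 in
/-- With `z` the second substep of method (1), `f(z) = f'(a)(e_z + O(e_z²))`
where `e_z = z - a`, and consequently `f(z) = O(e⁴)`. -/
theorem fz_expansion_and_order
    (f : ℝ → ℝ) (a : ℝ) (hf : ContDiffAt ℝ 8 f a)
    (h0 : f a = 0) (h1 : deriv f a ≠ 0)
    (u y z : ℝ → ℝ)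
    (hu : ∀ x, u x = f x / deriv f x)
    (hy : ∀ x, y x = x - u x)
    (hey : (fun x => y x - a) =O[𝓝 a] fun x => (x - a)^2)
    (hz : ∀ x, z x = x - u x * (1 + f (y x) / f x
        + (1 + 1/(1 + u x)) * (f (y x) / f x)^2)) :
    ((fun x => f (z x) - deriv f a * (z x - a)) =O[𝓝 a] fun x => (z x - a)^2) ∧
    ((fun x => f (z x)) =O[𝓝 a] fun x => (x - a)^4) := by
  obtain ⟨s, hs, hcd⟩ := hf.contDiffOn (le_refl _) (by simp)
  obtain ⟨U, hUs, hU, haU⟩ := mem_nhds_iff.1 hs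
  have hcd8 : ContDiffOn ℝ 8 f U := hcd.mono hUs
  have hcd7 : ContDiffOn ℝ 7 (deriv f) U := hcd8.deriv_of_isOpen hU (by norm_num)
  have hcd6 : ContDiffOn ℝ 6 (deriv (deriv f)) U := hcd7.deriv_of_isOpen hU (by norm_num)
  have hUev : ∀ᶠ x in 𝓝 a, x ∈ U := hU.eventually_mem haU
  have hd1 : ∀ᶠ x in 𝓝 a, DifferentiableAt ℝ f x :=
    hUev.mono fun x hx => (hcd8.contDiffAt (hU.mem_nhds hx)).differentiableAt (by norm_num)
  have hd2 : ∀ᶠ x in 𝓝 a, DifferentiableAt ℝ (deriv f) x :=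
    hUev.mono fun x hx => (hcd7.contDiffAt (hU.mem_nhds hx)).differentiableAt (by norm_num)
  have hd3a : DifferentiableAt ℝ (deriv (deriv f)) a :=
    (hcd6.contDiffAt (hU.mem_nhds haU)).differentiableAt (by norm_num)
  set A := deriv f a with hA
  set B := deriv (deriv f) a / 2 with hB
  have hA0 : A ≠ 0 := h1
  have hAp : 0 < |A| := abs_pos.2 hA0
  -- small-|x-a| helper
  have hsm : ∀ ε : ℝ, 0 < ε → ∀ᶠ x in 𝓝 a, |x - a| < ε := fun ε hε =>
    Metric.eventually_nhds_iff.mpr ⟨ε, hε, fun y hy => by rwa [Real.dist_eq] at hy⟩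
  have eP1 : (fun x : ℝ => x - a) =O[𝓝 a] fun x => (x - a)^1 :=
    (isBigO_refl _ _).congr (fun x => rfl) (fun x => (pow_one _).symm)
  have pT : ∀ k : ℕ, 1 ≤ k → Tendsto (fun x : ℝ => (x - a)^k) (𝓝 a) (𝓝 0) := by
    intro k hk
    have h : Tendsto (fun x : ℝ => (x - a)^k) (𝓝 a) (𝓝 ((a - a)^k)) :=
      ((continuous_id.sub continuous_const).pow k).tendsto a
    simpa [zero_pow (by omega : k ≠ 0)] using h
  -- Taylor expansions
  have hTf3 : (fun x => deriv (deriv f) x - 2*B) =O[𝓝 a] fun x => (x - a)^1 := by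
    refine hd3a.isBigO_sub.congr (fun x => ?_) (fun x => (pow_one _).symm)
    rw [hB]; ring
  have hTf2 : (fun x => deriv f x - (A + 2*B*(x-a))) =O[𝓝 a] fun x => (x - a)^2 := by
    have hpoly : ∀ x : ℝ, HasDerivAt (fun x => A + 2*B*(x-a)) (2*B) x := fun x => by
      simpa using (((hasDerivAt_id x).sub_const a).const_mul (2*B)).const_add A
    refine isBigO_succ_of_deriv (hd2.mono fun x hx => hx.sub (hpoly x).differentiableAt)
      (by rw [hA]; ring) ?_
    refine hTf3.congr' (EventuallyEq.symm (hd2.mono fun x hx => ?_)) EventuallyEq.rfl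
    rw [deriv_fun_sub hx (hpoly x).differentiableAt, (hpoly x).deriv]
  have hTf1 : (fun x => f x - (A*(x-a) + B*(x-a)^2)) =O[𝓝 a] fun x => (x - a)^3 := by
    have hpoly : ∀ x : ℝ, HasDerivAt (fun x => A*(x-a) + B*(x-a)^2) (A + 2*B*(x-a)) x := by
      intro x
      have p1 : HasDerivAt (fun x : ℝ => A*(x-a)) A x := by
        simpa using ((hasDerivAt_id x).sub_const a).const_mul A
      have p2 : HasDerivAt (fun x : ℝ => B*(x-a)^2) (2*B*(x-a)) x := by
        have := (((hasDerivAt_id x).sub_const a).pow 2).const_mul B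
        exact this.congr_deriv (by simp; ring)
      simpa using p1.fun_add p2
    refine isBigO_succ_of_deriv (hd1.mono fun x hx => hx.sub (hpoly x).differentiableAt)
      (by simp [h0]) ?_
    refine hTf2.congr' (EventuallyEq.symm (hd1.mono fun x hx => ?_)) EventuallyEq.rfl
    rw [deriv_fun_sub hx (hpoly x).differentiableAt, (hpoly x).deriv]
  have hTf1' : (fun x => f x - A*(x-a)) =O[𝓝 a] fun x => (x - a)^2 := by
    have h2 : (fun x : ℝ => B*(x-a)^2) =O[𝓝 a] fun x => (x-a)^2 :=
      (isBigO_refl _ _).const_mul_left B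
    refine ((hTf1.trans (pow_isBigO_pow (by norm_num))).add h2).congr (fun x => by ring) (fun x => rfl)
  have hTf2' : (fun x => deriv f x - A) =O[𝓝 a] fun x => (x - a)^1 := by
    have h2 : (fun x : ℝ => 2*B*(x-a)) =O[𝓝 a] fun x => (x-a)^1 :=
      eP1.const_mul_left (2*B)
    refine ((hTf2.trans (pow_isBigO_pow (by norm_num))).add h2).congr (fun x => by ring) (fun x => rfl)
  -- lower bounds
  have hctf' : ContinuousAt (deriv f) a :=
    ((hcd7.contDiffAt (hU.mem_nhds haU)).differentiableAt (by norm_num)).continuousAt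
  have hf'lb : ∀ᶠ x in 𝓝 a, |A|/2 ≤ |deriv f x| := by
    have hball : ∀ᶠ x in 𝓝 a, |deriv f x - A| < |A|/2 := by
      have := hctf'.tendsto
      rw [← hA] at this
      have hmem : {v : ℝ | |v - A| < |A|/2} ∈ 𝓝 A := by
        have : Metric.ball A (|A|/2) ∈ 𝓝 A := Metric.ball_mem_nhds A (by positivity)
        simpa [Metric.ball, Real.dist_eq] using this
      exact this hmem
    exact hball.mono fun x hx => by
      have := abs_sub_abs_le_abs_sub A (deriv f x)
      rw [abs_sub_comm] at this; linarith
  have hf'ne : ∀ᶠ x in 𝓝 a, deriv f x ≠ 0 := hf'lb.mono fun x hx h => by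
    rw [h, abs_zero] at hx; linarith
  have hflb : ∀ᶠ x in 𝓝 a, |A|/2 * |x - a| ≤ |f x| := by
    obtain ⟨C, hC⟩ := hTf1'.bound
    filter_upwards [hC, hsm (|A|/(2*(|C|+1))) (by positivity)] with x h1x h2x
    have habs : |f x - A*(x-a)| ≤ (|C|+1) * |x-a|^2 := by
      rw [Real.norm_eq_abs, Real.norm_eq_abs, abs_pow] at h1x
      nlinarith [le_abs_self C, pow_nonneg (abs_nonneg (x-a)) 2, abs_nonneg (x-a)]
    have h3 : (|C|+1) * |x-a|^2 ≤ |A|/2 * |x-a| := by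
      have h4 : (|C|+1) * |x-a| ≤ |A|/2 := by
        have h5 : (|C|+1) * |x-a| ≤ (|C|+1) * (|A|/(2*(|C|+1))) :=
          mul_le_mul_of_nonneg_left h2x.le (by positivity)
        have h6 : (|C|+1) * (|A|/(2*(|C|+1))) = |A|/2 := by field_simp
        linarith
      nlinarith [abs_nonneg (x-a)]
    have := abs_sub_abs_le_abs_sub (A*(x-a)) (f x)
    rw [abs_sub_comm (A*(x-a)) (f x), abs_mul] at this
    nlinarith [abs_nonneg (x-a)]
  -- u expansion: u = e + O(e²)
  have huO : (fun x => u x - (x-a)) =O[𝓝 a] fun x => (x-a)^2 := by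
    have hnum : (fun x => f x - (x-a)*deriv f x) =O[𝓝 a] fun x => (x-a)^2 := by
      have h2 : (fun x : ℝ => (x-a)*(deriv f x - A)) =O[𝓝 a] fun x => (x-a)^1*(x-a)^1 :=
        eP1.mul hTf2'
      refine (hTf1'.sub (h2.trans ?_)).congr (fun x => by ring) (fun x => rfl)
      exact (isBigO_refl _ _).congr (fun x => by ring) (fun x => rfl)
    refine (isBigO_div_const (c := |A|/2) (by positivity) hnum hf'lb).congr'
      (EventuallyEq.symm (hf'ne.mono fun x hx => ?_)) EventuallyEq.rfl
    show u x - (x - a) = (f x - (x-a)*deriv f x)/deriv f x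
    rw [hu x]; field_simp
  have huu : u =O[𝓝 a] fun x => (x-a)^1 := by
    refine ((huO.trans (pow_isBigO_pow (by norm_num))).add eP1).congr (fun x => by ring) (fun x => rfl)
  have hu0 : Tendsto u (𝓝 a) (𝓝 0) := huu.trans_tendsto (pT 1 le_rfl)
  have h1ulb : ∀ᶠ x in 𝓝 a, 1/2 ≤ |1 + u x| := by
    have : ∀ᶠ x in 𝓝 a, |u x| < 1/2 := by
      have hmem : {v : ℝ | |v| < 1/2} ∈ 𝓝 (0:ℝ) := by
        have : Metric.ball (0:ℝ) (1/2) ∈ 𝓝 (0:ℝ) := Metric.ball_mem_nhds 0 (by norm_num)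
        simpa [Metric.ball, Real.dist_eq] using this
      exact hu0 hmem
    exact this.mono fun x hx => by
      have h2 : (1:ℝ) ≤ |1 + u x| + |u x| := by
        calc (1:ℝ) = |(1 + u x) - u x| := by norm_num
          _ ≤ |1 + u x| + |u x| := abs_sub _ _
      linarith
  have h1une : ∀ᶠ x in 𝓝 a, 1 + u x ≠ 0 := h1ulb.mono fun x hx h => by
    rw [h, abs_zero] at hx; linarith
  -- y expansion: e_y = (B/A)e² + O(e³)
  have hey3 : (fun x => (y x - a) - (B/A)*(x-a)^2) =O[𝓝 a] fun x => (x-a)^3 := by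
    have hnum : (fun x => (x-a)*deriv f x - f x - (B/A)*(x-a)^2*deriv f x)
        =O[𝓝 a] fun x => (x-a)^3 := by
      have t1 : (fun x : ℝ => (x-a)*(deriv f x - (A + 2*B*(x-a))))
          =O[𝓝 a] fun x => (x-a)^3 :=
        (eP1.mul hTf2).congr (fun x => rfl) (fun x => by ring)
      have t2a : (fun x : ℝ => (x-a)^2*(deriv f x - (A + 2*B*(x-a))))
          =O[𝓝 a] fun x => (x-a)^4 :=
        ((isBigO_refl (fun x : ℝ => (x-a)^2) _).mul hTf2).congr (fun x => rfl)
          (fun x => by ring)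
      have t2 : (fun x : ℝ => (B/A)*((x-a)^2*(deriv f x - (A + 2*B*(x-a)))))
          =O[𝓝 a] fun x => (x-a)^3 :=
        (t2a.trans (pow_isBigO_pow (by norm_num))).const_mul_left _
      have t3 : (fun x : ℝ => (2*B^2/A)*(x-a)^3) =O[𝓝 a] fun x => (x-a)^3 :=
        (isBigO_refl _ _).const_mul_left _
      refine ((t1.sub (hTf1.trans (pow_isBigO_pow (by norm_num)))).sub t2 |>.sub t3).congr
        (fun x => by field_simp [hA0]; ring) (fun x => rfl)
    refine (isBigO_div_const (c := |A|/2) (by positivity) hnum hf'lb).congr'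
      (EventuallyEq.symm (hf'ne.mono fun x hx => ?_)) EventuallyEq.rfl
    show (y x - a) - (B/A)*(x-a)^2 = ((x-a)*deriv f x - f x - (B/A)*(x-a)^2*deriv f x)/deriv f x
    rw [hy x, hu x]; field_simp [hA0]; ring
  have hyt : Tendsto y (𝓝 a) (𝓝 a) :=
    tendsto_sub_nhds_zero_iff.1 (hey.trans_tendsto (pT 2 (by norm_num)))
  -- f(y) expansions
  have hfy4 : (fun x => f (y x) - A*(y x - a)) =O[𝓝 a] fun x => (x-a)^4 := by
    have hc : (fun x => f (y x) - A*(y x - a)) =O[𝓝 a] fun x => (y x - a)^2 := by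
      have := hTf1'.comp_tendsto hyt
      simpa [Function.comp_def] using this
    refine hc.trans ((hey.mul hey).congr (fun x => by ring) (fun x => by ring))
  have hfyO : (fun x => f (y x)) =O[𝓝 a] fun x => (x-a)^2 := by
    refine ((hfy4.trans (pow_isBigO_pow (by norm_num))).add (hey.const_mul_left A)).congr
      (fun x => by ring) (fun x => rfl)
  -- t = f(y)/f(x) expansion
  have ht : (fun x => f (y x)/f x - (B/A)*(x-a)) =O[𝓝 a] fun x => (x-a)^2 := by
    have g1 : (fun x => f (y x) - A*(y x - a)) =O[𝓝 a] fun x => (x-a)^3 :=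
      hfy4.trans (pow_isBigO_pow (by norm_num))
    have g2 := hey3.const_mul_left A
    have g3 : (fun x => (B/A)*((x-a)*(f x - A*(x-a)))) =O[𝓝 a] fun x => (x-a)^3 :=
      ((eP1.mul hTf1').congr (fun _ => rfl) (fun x => by ring)).const_mul_left _
    have hg : (fun x => f (y x) - (B/A)*((x-a)*f x)) =O[𝓝 a] fun x => (x-a)^3 :=
      ((g1.add g2).sub g3).congr (fun x => by field_simp [hA0]; ring) (fun x => rfl)
    refine (isBigO_div_lin (c := |A|/2) (by positivity) (k := 2) hg hflb).congr'
      (EventuallyEq.symm (hflb.mono fun x hx => ?_)) EventuallyEq.rfl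
    show f (y x)/f x - (B/A)*(x-a) = (f (y x) - (B/A)*((x-a)*f x))/f x
    rcases eq_or_ne (f x) 0 with h | h
    · have hxa : x = a := by
        by_contra hne
        have h2 : 0 < |x - a| := abs_pos.2 (sub_ne_zero.2 hne)
        rw [h, abs_zero] at hx; nlinarith
      rw [hxa]
      have hya : y a = a := by rw [hy a, hu a, h0]; simp
      simp [hya, h0]
    · field_simp
  have htO : (fun x => f (y x)/f x) =O[𝓝 a] fun x => (x-a)^1 :=
    ((ht.trans (pow_isBigO_pow (by norm_num))).add (eP1.const_mul_left (B/A))).congr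
      (fun x => by ring) (fun _ => rfl)
  -- inverse derivative expansions
  have hinvO : (fun x => 1/deriv f x) =O[𝓝 a] fun _ => (1:ℝ) := by
    refine (isBigO_div_const (c := |A|/2) (by positivity) (isBigO_refl (fun _ => (1:ℝ)) _) hf'lb).congr
      (fun x => by rw [one_div]) (fun _ => rfl)
  have hinv2 : (fun x => 1/deriv f x - 1/A + (2*B/A^2)*(x-a)) =O[𝓝 a] fun x => (x-a)^2 := by
    have n1 : (fun x => A*(deriv f x - (A + 2*B*(x-a)))) =O[𝓝 a] fun x => (x-a)^2 :=
      hTf2.const_mul_left A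
    have n2 : (fun x => 2*B*((x-a)*(deriv f x - A))) =O[𝓝 a] fun x => (x-a)^2 :=
      ((eP1.mul hTf2').congr (fun _ => rfl) (fun x => by ring)).const_mul_left (2*B)
    have hN : (fun x => A^2 - A*deriv f x + 2*B*(x-a)*deriv f x) =O[𝓝 a] fun x => (x-a)^2 :=
      (n1.neg_left.add n2).congr (fun x => by ring) (fun _ => rfl)
    have hc : (0:ℝ) < |A|^2*(|A|/2) := by
      have := hAp; positivity
    have hdlb : ∀ᶠ x in 𝓝 a, |A|^2*(|A|/2) ≤ |A^2*deriv f x| := hf'lb.mono fun x hx => by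
      rw [abs_mul, abs_pow]
      exact mul_le_mul_of_nonneg_left hx (by positivity)
    refine (isBigO_div_const hc hN hdlb).congr'
      (EventuallyEq.symm (hf'ne.mono fun x hx => ?_)) EventuallyEq.rfl
    show 1/deriv f x - 1/A + (2*B/A^2)*(x-a)
        = (A^2 - A*deriv f x + 2*B*(x-a)*deriv f x)/(A^2*deriv f x)
    field_simp
  -- c = 1 + 1/(1+u) expansion
  have hcc : (fun x => (1 + 1/(1 + u x)) - 2) =O[𝓝 a] fun x => (x-a)^1 := by
    refine (isBigO_div_const (c := 1/2) (by norm_num) huu.neg_left h1ulb).congr'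
      (EventuallyEq.symm (h1une.mono fun x hx => ?_)) EventuallyEq.rfl
    show (1 + 1/(1 + u x)) - 2 = (-u x)/(1 + u x)
    field_simp; ring
  have P1one : (fun x : ℝ => (x-a)^1) =O[𝓝 a] fun _ => (1:ℝ) :=
    (pow_isBigO_pow (by norm_num)).congr (fun _ => rfl) (fun x => pow_zero _)
  have hcO : (fun x => 1 + 1/(1 + u x)) =O[𝓝 a] fun _ => (1:ℝ) :=
    ((hcc.trans P1one).add (isBigO_const_const (2:ℝ) one_ne_zero _)).congr
      (fun x => by ring) (fun _ => rfl)
  -- key pointwise identity u*t = f(y)/f'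
  have hut : ∀ x, u x * (f (y x)/f x) = f (y x)/deriv f x := by
    intro x
    rcases eq_or_ne (f x) 0 with h | h
    · have hu0' : u x = 0 := by rw [hu x, h, zero_div]
      have hyx : y x = x := by rw [hy x, hu0', sub_zero]
      rw [hu0', hyx, h]; simp
    · rcases eq_or_ne (deriv f x) 0 with h' | h'
      · have hu0' : u x = 0 := by rw [hu x, h', div_zero]
        rw [hu0', h']; simp
      · rw [hu x]; field_simp
  -- Term 1
  have hT1 : (fun x => (y x - a) - f (y x)/deriv f x - (2*B^2/A^2)*(x-a)^3)
      =O[𝓝 a] fun x => (x-a)^4 := by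
    have s1 : (fun x => (f (y x) - A*(y x - a))*(1/deriv f x)) =O[𝓝 a] fun x => (x-a)^4 :=
      (hfy4.mul hinvO).congr (fun _ => rfl) (fun x => by ring)
    have s2 : (fun x => A*((y x - a)*(1/deriv f x - 1/A + (2*B/A^2)*(x-a))))
        =O[𝓝 a] fun x => (x-a)^4 :=
      ((hey.mul hinv2).congr (fun _ => rfl) (fun x => by ring)).const_mul_left A
    have s3 : (fun x => (2*B/A)*((x-a)*((y x - a) - (B/A)*(x-a)^2)))
        =O[𝓝 a] fun x => (x-a)^4 :=
      ((eP1.mul hey3).congr (fun _ => rfl) (fun x => by ring)).const_mul_left _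
    refine ((s1.neg_left.sub s2).add s3).congr' (hf'ne.mono fun x hx => ?_) EventuallyEq.rfl
    show -((f (y x) - A*(y x - a))*(1/deriv f x))
        - A*((y x - a)*(1/deriv f x - 1/A + (2*B/A^2)*(x-a)))
        + (2*B/A)*((x-a)*((y x - a) - (B/A)*(x-a)^2))
        = (y x - a) - f (y x)/deriv f x - (2*B^2/A^2)*(x-a)^3
    field_simp [hx, hA0]
    ring
  -- Term 2
  have hT2 : (fun x => u x * ((1 + 1/(1 + u x))*(f (y x)/f x)^2) - (2*B^2/A^2)*(x-a)^3)
      =O[𝓝 a] fun x => (x-a)^4 := by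
    have p1 : (fun x => (u x - (x-a))*((1 + 1/(1 + u x))*(f (y x)/f x)^2))
        =O[𝓝 a] fun x => (x-a)^4 :=
      (huO.mul (hcO.mul (htO.mul htO))).congr (fun x => by ring) (fun x => by ring)
    have p2 : (fun x => (x-a)*(((1 + 1/(1 + u x)) - 2)*(f (y x)/f x)^2))
        =O[𝓝 a] fun x => (x-a)^4 :=
      (eP1.mul (hcc.mul (htO.mul htO))).congr (fun x => by ring) (fun x => by ring)
    have p3 : (fun x => 2*((x-a)*((f (y x)/f x - (B/A)*(x-a))*(f (y x)/f x + (B/A)*(x-a)))))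
        =O[𝓝 a] fun x => (x-a)^4 :=
      ((eP1.mul (ht.mul (htO.add (eP1.const_mul_left (B/A))))).congr
        (fun _ => rfl) (fun x => by ring)).const_mul_left 2
    exact ((p1.add p2).add p3).congr (fun x => by ring) (fun _ => rfl)
  -- e_z = O(e⁴)
  have hez : (fun x => z x - a) =O[𝓝 a] fun x => (x-a)^4 := by
    have hid : ∀ x, z x - a
        = ((y x - a) - f (y x)/deriv f x - (2*B^2/A^2)*(x-a)^3)
          - (u x * ((1 + 1/(1 + u x))*(f (y x)/f x)^2) - (2*B^2/A^2)*(x-a)^3) := by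
      intro x
      rw [hz x]
      linear_combination (-1:ℝ) * hy x - hut x
    exact (hT1.sub hT2).congr (fun x => (hid x).symm) (fun _ => rfl)
  -- conclusions
  have hzt : Tendsto z (𝓝 a) (𝓝 a) :=
    tendsto_sub_nhds_zero_iff.1 (hez.trans_tendsto (pT 4 (by norm_num)))
  have goal1 : (fun x => f (z x) - A*(z x - a)) =O[𝓝 a] fun x => (z x - a)^2 := by
    have := hTf1'.comp_tendsto hzt
    simpa [Function.comp_def] using this
  refine ⟨goal1, ?_⟩
  have hz2 : (fun x => (z x - a)^2) =O[𝓝 a] fun x => (x-a)^4 := by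
    refine ((hez.mul hez).congr (fun x => by ring) (fun x => by ring)).trans
      (pow_isBigO_pow (j := 8) (by norm_num))
  exact ((goal1.trans hz2).add (hez.const_mul_left A)).congr (fun x => by ring) (fun _ => rfl)
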